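/- arXiv:2505.07789 — 6 statements merged into one kernel-verified Lean document; each statement's English description precedes it below -/
import Mathlib

section
/- In any quasi relation algebra the identities ∼1 = ¬1 = −1 hold, and the identity (Di): ¬∼a = −¬a holds for every element a. -/
/-- An involutive FL-algebra (InFL-algebra) structure on a lattice:
a monoid operation with residuation law (Res) expressed via the two
linear negations `lneg` (∼) and `rneg` (−), which are inverse involutions. -/
structure InFL (A : Type*) [Lattice A] where
  mul : A → A → A
  one : A
  mul_assoc : ∀ a b c : A, mul (mul a b) c = mul a (mul b c)
  one_mul : ∀ a : A, mul one a = a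
  mul_one : ∀ a : A, mul a one = a
  lneg : A → A
  rneg : A → A
  res_left : ∀ a b c : A, mul a b ≤ c ↔ a ≤ rneg (mul b (lneg c))
  res_right : ∀ a b c : A, mul a b ≤ c ↔ b ≤ lneg (mul (rneg c) a)
  rneg_lneg : ∀ a : A, rneg (lneg a) = a
  lneg_rneg : ∀ a : A, lneg (rneg a) = a

/-- The sum operation `a + b := −(∼b · ∼a)` of an InFL-algebra. -/
def InFL.sum {A : Type*} [Lattice A] (S : InFL A) (a b : A) : A :=
  S.rneg (S.mul (S.lneg b) (S.lneg a))

namespace InFL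
variable {A : Type*} [Lattice A] (S : InFL A)

lemma mono_left {a b : A} (c : A) (h : a ≤ b) : S.mul a c ≤ S.mul b c := by
  have h1 : b ≤ S.rneg (S.mul c (S.lneg (S.mul b c))) := (S.res_left b c _).mp le_rfl
  exact (S.res_left a c _).mpr (le_trans h h1)

lemma mono_right {a b : A} (c : A) (h : a ≤ b) : S.mul c a ≤ S.mul c b := by
  have h1 : b ≤ S.lneg (S.mul (S.rneg (S.mul c b)) c) := (S.res_right c b _).mp le_rfl
  exact (S.res_right c a _).mpr (le_trans h h1)

lemma E1 (a b : A) : S.mul a b ≤ S.rneg S.one ↔ a ≤ S.rneg b := by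
  have := S.res_left a b (S.rneg S.one)
  rwa [S.lneg_rneg, S.mul_one] at this

lemma E2 (a b : A) : S.mul a b ≤ S.lneg S.one ↔ b ≤ S.lneg a := by
  have := S.res_right a b (S.lneg S.one)
  rwa [S.rneg_lneg, S.one_mul] at this

lemma zero_eq : S.lneg S.one = S.rneg S.one := by
  apply le_antisymm
  · have h := (S.E1 S.one (S.lneg S.one)).mpr (by rw [S.rneg_lneg])
    rwa [S.one_mul] at h
  · have h := (S.E2 (S.rneg S.one) S.one).mpr (by rw [S.lneg_rneg])
    rwa [S.mul_one] at h

lemma lneg_antitone {a b : A} (h : a ≤ b) : S.lneg b ≤ S.lneg a := by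
  have h1 : S.mul b (S.lneg b) ≤ S.lneg S.one := (S.E2 b (S.lneg b)).mpr le_rfl
  exact (S.E2 a (S.lneg b)).mp (le_trans (S.mono_left _ h) h1)

lemma rneg_antitone {a b : A} (h : a ≤ b) : S.rneg b ≤ S.rneg a := by
  have h1 : S.mul (S.rneg b) b ≤ S.rneg S.one := (S.E1 (S.rneg b) b).mpr le_rfl
  exact (S.E1 (S.rneg b) a).mp (le_trans (S.mono_right _ h) h1)

lemma lneg_le_lneg_iff {a b : A} : S.lneg b ≤ S.lneg a ↔ a ≤ b := by
  constructor
  · intro h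
    have := S.rneg_antitone h
    rwa [S.rneg_lneg, S.rneg_lneg] at this
  · exact S.lneg_antitone

end InFL

/-- A quasi relation algebra: a De Morgan InFL-algebra satisfying (Dp):
`¬(a·b) = ¬a + ¬b`. -/
structure QRA (A : Type*) [Lattice A] extends InFL A where
  neg : A → A
  neg_neg : ∀ a : A, neg (neg a) = a
  dm : ∀ a b : A, neg (a ⊓ b) = neg a ⊔ neg b
  dp : ∀ a b : A, neg (mul a b) = rneg (mul (lneg (neg b)) (lneg (neg a)))

namespace QRA
variable {A : Type*} [Lattice A] (Q : QRA A)

lemma neg_antitone {a b : A} (h : a ≤ b) : Q.neg b ≤ Q.neg a := by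
  have h1 : b ⊓ a = a := inf_eq_right.mpr h
  have h2 := Q.dm b a
  rw [h1] at h2
  exact le_of_le_of_eq le_sup_left h2.symm

lemma neg_le_neg_iff {a b : A} : Q.neg b ≤ Q.neg a ↔ a ≤ b := by
  constructor
  · intro h
    have := Q.neg_antitone h
    rwa [Q.neg_neg, Q.neg_neg] at this
  · exact Q.neg_antitone

/-- `f a = ∼¬a` -/
def f (a : A) : A := Q.lneg (Q.neg a)

lemma f_mul (a b : A) : Q.f (Q.mul a b) = Q.mul (Q.f b) (Q.f a) := by
  have := Q.dp a b
  have h := congrArg Q.lneg this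
  rw [Q.lneg_rneg] at h
  exact h

lemma f_surj (x : A) : Q.f (Q.neg (Q.rneg x)) = x := by
  simp [f, Q.neg_neg, Q.lneg_rneg]

lemma f_one : Q.f Q.one = Q.one := by
  have key : ∀ x : A, Q.mul (Q.f Q.one) x = x := by
    intro x
    have := Q.f_mul (Q.neg (Q.rneg x)) Q.one
    rw [Q.mul_one, Q.f_surj] at this
    exact this.symm
  have := key Q.one
  rwa [Q.mul_one] at this

lemma neg_one_eq_rneg_one : Q.neg Q.one = Q.rneg Q.one := by
  have h := congrArg Q.rneg Q.f_one
  rw [f, Q.rneg_lneg] at h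
  exact h

lemma f_le_f_iff {a b : A} : Q.f a ≤ Q.f b ↔ a ≤ b := by
  rw [f, f, Q.toInFL.lneg_le_lneg_iff, Q.neg_le_neg_iff]

lemma neg_one_eq_lneg_one : Q.neg Q.one = Q.lneg Q.one := by
  rw [Q.neg_one_eq_rneg_one, Q.toInFL.zero_eq]

lemma f_zero : Q.f (Q.lneg Q.one) = Q.lneg Q.one := by
  rw [f, ← Q.neg_one_eq_lneg_one, Q.neg_neg, Q.neg_one_eq_lneg_one]

lemma key_iff (a b : A) : a ≤ Q.rneg b ↔ Q.f a ≤ Q.lneg (Q.f b) := by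
  rw [← Q.toInFL.E1 a b]
  have czero : Q.lneg Q.one = Q.rneg Q.one := Q.toInFL.zero_eq
  constructor
  · intro h
    have h2 : Q.f (Q.mul a b) ≤ Q.f (Q.rneg Q.one) := Q.f_le_f_iff.mpr h
    rw [Q.f_mul, ← czero, Q.f_zero] at h2
    exact (Q.toInFL.E2 (Q.f b) (Q.f a)).mp h2
  · intro h
    have h2 : Q.mul (Q.f b) (Q.f a) ≤ Q.lneg Q.one := (Q.toInFL.E2 _ _).mpr h
    rw [← Q.f_zero, ← Q.f_mul] at h2
    rw [← czero]
    exact Q.f_le_f_iff.mp h2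

lemma f_rneg (b : A) : Q.f (Q.rneg b) = Q.lneg (Q.f b) := by
  apply le_antisymm
  · exact (Q.key_iff _ _).mp le_rfl
  · have h : Q.f (Q.neg (Q.rneg (Q.lneg (Q.f b)))) ≤ Q.lneg (Q.f b) := by
      rw [Q.f_surj]
    have h2 := (Q.key_iff _ b).mpr h
    have h3 := Q.f_le_f_iff.mpr h2
    rwa [Q.f_surj] at h3

lemma di (a : A) : Q.neg (Q.lneg a) = Q.rneg (Q.neg a) := by
  have h := Q.f_rneg (Q.lneg a)
  rw [Q.rneg_lneg] at h
  have h2 := congrArg Q.rneg h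
  rw [Q.rneg_lneg] at h2
  rw [f, Q.rneg_lneg] at h2
  have h3 := congrArg Q.rneg h2
  rw [f, Q.rneg_lneg] at h3
  exact h3.symm

end QRA

/-- In any quasi relation algebra the identities `∼1 = ¬1 = −1` hold, and the
identity (Di): `¬∼a = −¬a` holds for every element `a`. -/
theorem qra_neg_one_and_di {A : Type*} [Lattice A] (Q : QRA A) :
    Q.lneg Q.one = Q.neg Q.one ∧ Q.neg Q.one = Q.rneg Q.one ∧
    ∀ a : A, Q.neg (Q.lneg a) = Q.rneg (Q.neg a) :=
  ⟨Q.neg_one_eq_lneg_one.symm, Q.neg_one_eq_rneg_one, Q.di⟩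
end

section
/- Let W = (W, I, ≼, ∘, ∼, −) be a DInFL-frame. Then its complex algebra W^+ = (Up(W,≼), ∩, ∪, ∘, I, ∼, −) is a distributive involutive FL-algebra: Up(W,≼) is closed under ∩, ∪, ∘, ∼ and −, contains I, the operation ∘ is associative with identity I, and for all upsets T, U, V: T∘U ⊆ V ⟺ U ⊆ ∼(−V∘T) ⟺ T ⊆ −(U∘∼V). -/
/-- Extension of a binary set-operation `c : W → W → Set W` to subsets:
`U ∘ V = ⋃ { x ∘ y : x ∈ U, y ∈ V }`. -/
def setComp {W : Type*} (c : W → W → Set W) (U V : Set W) : Set W :=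
  {z | ∃ x ∈ U, ∃ y ∈ V, z ∈ c x y}

/-- A DInFL-frame `(W, I, ≼, ∘, ∼, −)`. -/
structure DInFLFrame (W : Type*) where
  I : Set W
  le : W → W → Prop
  le_refl : ∀ x, le x x
  le_trans : ∀ x y z, le x y → le y z → le x z
  le_antisymm : ∀ x y, le x y → le y x → x = y
  comp : W → W → Set W
  tld : W → W
  mns : W → W
  ax1 : ∀ x y, (le x y ↔ y ∈ setComp comp I {x}) ∧ (le x y ↔ y ∈ setComp comp {x} I)
  ax2 : ∀ x y, le x y → x ∈ I → y ∈ I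
  ax3 : ∀ u v x y, le x y → x ∈ comp u v → y ∈ comp u v
  ax4 : ∀ x y z, setComp comp (comp x y) {z} = setComp comp {x} (comp y z)
  ax5 : ∀ x y z, tld z ∈ comp x y ↔ mns y ∈ comp z x
  ax6 : ∀ x, le (mns (tld x)) x ∧ le (tld (mns x)) x

/-- Upsets of the underlying poset of a DInFL-frame. -/
def DInFLFrame.IsUpset {W : Type*} (F : DInFLFrame W) (U : Set W) : Prop :=
  ∀ x y, F.le x y → x ∈ U → y ∈ U

/-- The operation `∼U = {w : w⁻ ∉ U}` of the complex algebra. -/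
def DInFLFrame.sneg {W : Type*} (F : DInFLFrame W) (U : Set W) : Set W :=
  {w | F.mns w ∉ U}

/-- The operation `−U = {w : w^∼ ∉ U}` of the complex algebra. -/
def DInFLFrame.mneg {W : Type*} (F : DInFLFrame W) (U : Set W) : Set W :=
  {w | F.tld w ∉ U}

namespace DInFLFrame

variable {W : Type*} (F : DInFLFrame W)

lemma le_iff_left {x y : W} : F.le x y ↔ ∃ e ∈ F.I, y ∈ F.comp e x := by
  have h := (F.ax1 x y).1
  simpa [setComp] using h

lemma le_iff_right {x y : W} : F.le x y ↔ ∃ e ∈ F.I, y ∈ F.comp x e := by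
  have h := (F.ax1 x y).2
  simpa [setComp] using h

lemma tld_mns (x : W) : F.tld (F.mns x) = x := by
  obtain ⟨e, he, h⟩ := (F.le_iff_right).mp (F.le_refl (F.mns x))
  have h2 : F.tld (F.mns x) ∈ F.comp e x := (F.ax5 e x (F.mns x)).mpr h
  exact F.le_antisymm _ _ ((F.ax6 x).2) ((F.le_iff_left).mpr ⟨e, he, h2⟩)

lemma mns_tld (x : W) : F.mns (F.tld x) = x := by
  obtain ⟨e, he, h⟩ := (F.le_iff_left).mp (F.le_refl (F.tld x))
  have h2 : F.mns (F.tld x) ∈ F.comp x e := (F.ax5 e (F.tld x) x).mp h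
  exact F.le_antisymm _ _ ((F.ax6 x).1) ((F.le_iff_right).mpr ⟨e, he, h2⟩)

lemma tld_anti {x y : W} (h : F.le x y) : F.le (F.tld y) (F.tld x) := by
  obtain ⟨e, he, hy⟩ := (F.le_iff_right).mp h
  have hy' : F.mns (F.tld y) ∈ F.comp x e := by rw [F.mns_tld]; exact hy
  exact (F.le_iff_left).mpr ⟨e, he, (F.ax5 e (F.tld y) x).mpr hy'⟩

lemma mns_anti {x y : W} (h : F.le x y) : F.le (F.mns y) (F.mns x) := by
  obtain ⟨e, he, hy⟩ := (F.le_iff_left).mp h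
  have hy' : F.tld (F.mns y) ∈ F.comp e x := by rw [F.tld_mns]; exact hy
  exact (F.le_iff_right).mpr ⟨e, he, (F.ax5 e x (F.mns y)).mp hy'⟩

end DInFLFrame

/-- The complex algebra `W⁺ = (Up(W,≼), ∩, ∪, ∘, I, ∼, −)` of a DInFL-frame is a
distributive involutive FL-algebra: the upsets are closed under all operations,
`I` is an upset and an identity for the associative operation `∘`, and the
residuation law holds. -/
theorem complex_algebra_is_DInFL {W : Type*} (F : DInFLFrame W) :
    (∀ U V, F.IsUpset U → F.IsUpset V → F.IsUpset (U ∩ V) ∧ F.IsUpset (U ∪ V)) ∧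
    F.IsUpset F.I ∧
    (∀ U V, F.IsUpset U → F.IsUpset V → F.IsUpset (setComp F.comp U V)) ∧
    (∀ U, F.IsUpset U → F.IsUpset (F.sneg U) ∧ F.IsUpset (F.mneg U)) ∧
    (∀ U, F.IsUpset U → setComp F.comp F.I U = U ∧ setComp F.comp U F.I = U) ∧
    (∀ U V T : Set W,
      setComp F.comp (setComp F.comp U V) T = setComp F.comp U (setComp F.comp V T)) ∧
    (∀ T U V, F.IsUpset T → F.IsUpset U → F.IsUpset V →
      ((setComp F.comp T U ⊆ V ↔ U ⊆ F.sneg (setComp F.comp (F.mneg V) T)) ∧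
       (setComp F.comp T U ⊆ V ↔ T ⊆ F.mneg (setComp F.comp U (F.sneg V))))) := by
  refine ⟨?_, ?_, ?_, ?_, ?_, ?_, ?_⟩
  · -- intersections and unions of upsets
    intro U V hU hV
    constructor
    · intro x y hxy hx
      exact ⟨hU x y hxy hx.1, hV x y hxy hx.2⟩
    · intro x y hxy hx
      rcases hx with hx | hx
      · exact Or.inl (hU x y hxy hx)
      · exact Or.inr (hV x y hxy hx)
  · -- I is an upset
    intro x y hxy hx
    exact F.ax2 x y hxy hx
  · -- ∘ preserves upsets
    rintro U V hU hV x y hxy ⟨u, hu, v, hv, hx⟩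
    exact ⟨u, hu, v, hv, F.ax3 u v x y hxy hx⟩
  · -- ∼ and − preserve upsets
    intro U hU
    constructor
    · intro x y hxy hx hmem
      exact hx (hU _ _ (F.mns_anti hxy) hmem)
    · intro x y hxy hx hmem
      exact hx (hU _ _ (F.tld_anti hxy) hmem)
  · -- I is an identity
    intro U hU
    constructor
    · apply Set.Subset.antisymm
      · rintro z ⟨e, he, u, hu, hz⟩
        exact hU u z ((F.le_iff_left).mpr ⟨e, he, hz⟩) hu
      · intro u hu
        obtain ⟨e, he, h⟩ := (F.le_iff_left).mp (F.le_refl u)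
        exact ⟨e, he, u, hu, h⟩
    · apply Set.Subset.antisymm
      · rintro z ⟨u, hu, e, he, hz⟩
        exact hU u z ((F.le_iff_right).mpr ⟨e, he, hz⟩) hu
      · intro u hu
        obtain ⟨e, he, h⟩ := (F.le_iff_right).mp (F.le_refl u)
        exact ⟨u, hu, e, he, h⟩
  · -- associativity
    intro U V T
    have key : ∀ x y z w : W, (∃ a ∈ F.comp x y, w ∈ F.comp a z) ↔
        (∃ b ∈ F.comp y z, w ∈ F.comp x b) := by
      intro x y z w
      have h := Set.ext_iff.mp (F.ax4 x y z) w
      simpa [setComp] using h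
    ext w
    constructor
    · rintro ⟨a, ⟨x, hx, y, hy, ha⟩, z, hz, hw⟩
      obtain ⟨b, hb, hw'⟩ := (key x y z w).mp ⟨a, ha, hw⟩
      exact ⟨x, hx, b, ⟨y, hy, z, hz, hb⟩, hw'⟩
    · rintro ⟨x, hx, b, ⟨y, hy, z, hz, hb⟩, hw⟩
      obtain ⟨a, ha, hw'⟩ := (key x y z w).mpr ⟨b, hb, hw⟩
      exact ⟨a, ⟨x, hx, y, hy, ha⟩, z, hz, hw'⟩
  · -- residuation
    intro T U V _ _ _
    constructor
    · constructor
      · rintro h u hu ⟨w, hw, t, ht, hc⟩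
        exact hw (h ⟨t, ht, u, hu, (F.ax5 t u w).mpr hc⟩)
      · rintro h z ⟨t, ht, u, hu, hz⟩
        by_contra hzV
        have h1 : F.mns z ∈ F.mneg V := by
          show F.tld (F.mns z) ∉ V
          rw [F.tld_mns]; exact hzV
        have h2 : F.tld (F.mns z) ∈ F.comp t u := by rw [F.tld_mns]; exact hz
        exact h hu ⟨F.mns z, h1, t, ht, (F.ax5 t u (F.mns z)).mp h2⟩
    · constructor
      · rintro h t ht ⟨u, hu, v, hv, hc⟩
        exact hv (h ⟨t, ht, u, hu, (F.ax5 u v t).mp hc⟩)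
      · rintro h z ⟨t, ht, u, hu, hz⟩
        by_contra hzV
        have h1 : F.tld z ∈ F.sneg V := by
          show F.mns (F.tld z) ∉ V
          rw [F.mns_tld]; exact hzV
        have h2 : F.mns (F.tld z) ∈ F.comp t u := by rw [F.mns_tld]; exact hz
        exact h ht ⟨u, hu, F.tld z, h1, (F.ax5 u (F.tld z) t).mpr h2⟩
end

section
/- Let A = (A,∧,∨,·,1,∼,−) be a complete perfect distributive InFL-algebra. Define, on the set J∞(A) of completely join-irreducible elements: I₁ = {i ∈ J∞(A) : i ≤ 1}; a ≼ b iff b ≤ a; c ∈ a∘b iff c ≤ a·b; a^∼ = ∼κ(a); a^− = −κ(a). Then A_+ = (J∞(A), I₁, ≼, ∘, ∼, −) is a DInFL-frame. -/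
/-- Completely join-irreducible element of a complete lattice. -/
def CJI {A : Type*} [CompleteLattice A] (j : A) : Prop :=
  ∀ S : Set A, j = sSup S → j ∈ S

/-- Completely meet-irreducible element of a complete lattice. -/
def CMI {A : Type*} [CompleteLattice A] (m : A) : Prop :=
  ∀ S : Set A, m = sInf S → m ∈ S

/-- A complete lattice is perfect if the completely join-irreducibles are join-dense
and the completely meet-irreducibles are meet-dense. -/
def PerfectLattice (A : Type*) [CompleteLattice A] : Prop :=
  ∀ a : A, a = sSup {j | CJI j ∧ j ≤ a} ∧ a = sInf {m | CMI m ∧ a ≤ m}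

/-- The map `κ(j) = ⋁ {a : j ≰ a}`. -/
def kappa {A : Type*} [CompleteLattice A] (j : A) : A :=
  sSup {a | ¬ j ≤ a}

section Aux

variable {A : Type*} [CompleteLattice A] (S : InFL A)

lemma mul_le_mul_l {a b : A} (x : A) (h : a ≤ b) : S.mul a x ≤ S.mul b x :=
  (S.res_left a x (S.mul b x)).2 (h.trans ((S.res_left b x (S.mul b x)).1 le_rfl))

lemma mul_le_mul_r {a b : A} (x : A) (h : a ≤ b) : S.mul x a ≤ S.mul x b :=
  (S.res_right x a (S.mul x b)).2 (h.trans ((S.res_right x b (S.mul x b)).1 le_rfl))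

lemma lneg_antitone {a b : A} (h : a ≤ b) : S.lneg b ≤ S.lneg a := by
  have h1 : S.mul b (S.lneg b) ≤ S.lneg S.one :=
    (S.res_right b (S.lneg b) (S.lneg S.one)).2 (by rw [S.rneg_lneg, S.one_mul])
  have h2 : S.mul a (S.lneg b) ≤ S.lneg S.one := le_trans (mul_le_mul_l S _ h) h1
  have h3 := (S.res_right a (S.lneg b) (S.lneg S.one)).1 h2
  rwa [S.rneg_lneg, S.one_mul] at h3

lemma rneg_antitone {a b : A} (h : a ≤ b) : S.rneg b ≤ S.rneg a := by
  have h1 : S.mul (S.rneg b) b ≤ S.rneg S.one :=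
    (S.res_left (S.rneg b) b (S.rneg S.one)).2 (by rw [S.lneg_rneg, S.mul_one])
  have h2 : S.mul (S.rneg b) a ≤ S.rneg S.one := le_trans (mul_le_mul_r S _ h) h1
  have h3 := (S.res_left (S.rneg b) a (S.rneg S.one)).1 h2
  rwa [S.lneg_rneg, S.mul_one] at h3

lemma g1 (a b : A) : a ≤ S.rneg b ↔ b ≤ S.lneg a := by
  constructor
  · intro h; have := lneg_antitone S h; rwa [S.lneg_rneg] at this
  · intro h; have := rneg_antitone S h; rwa [S.rneg_lneg] at this

lemma g2 (a b : A) : a ≤ S.lneg b ↔ b ≤ S.rneg a := by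
  constructor
  · intro h; have := rneg_antitone S h; rwa [S.rneg_lneg] at this
  · intro h; have := lneg_antitone S h; rwa [S.lneg_rneg] at this

/-- The rotation property: `z ≤ −(x·y) ↔ y ≤ ∼(z·x)`. -/
lemma rot (x y z : A) : z ≤ S.rneg (S.mul x y) ↔ y ≤ S.lneg (S.mul (S.rneg (S.lneg z)) x) := by
  rw [g1, S.res_right]

lemma rot' (x y z : A) : z ≤ S.rneg (S.mul x y) ↔ y ≤ S.lneg (S.mul z x) := by
  have := rot S x y z; rwa [S.rneg_lneg] at this

/-- In a perfect distributive lattice, `κ(j)` is the largest element not above a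
completely join-irreducible `j`, and it is completely meet-irreducible. -/
lemma kappa_prop (hperf : PerfectLattice A)
    (hdist : ∀ a b c : A, a ⊓ (b ⊔ c) = (a ⊓ b) ⊔ (a ⊓ c))
    {j : A} (hj : CJI j) :
    CMI (kappa j) ∧ ∀ a : A, a ≤ kappa j ↔ ¬ j ≤ a := by
  have hs : sSup {a : A | a < j} < j := by
    refine lt_of_le_of_ne (sSup_le fun a ha => ha.le) fun heq => ?_
    exact lt_irrefl j (hj {a : A | a < j} heq.symm)
  obtain ⟨m, hmc, hjm, hmax⟩ :
      ∃ m, CMI m ∧ ¬ j ≤ m ∧ ∀ a, ¬ j ≤ a → a ≤ m := by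
    set s := sSup {a : A | a < j} with hsdef
    have hinf := (hperf s).2
    have hex : ∃ m, (CMI m ∧ s ≤ m) ∧ ¬ j ≤ m := by
      by_contra hcon
      push_neg at hcon
      have : j ≤ s := by
        rw [hinf]; exact le_sInf fun m hm => hcon m hm
      exact hs.not_ge this
    obtain ⟨m, ⟨hmc, hsm⟩, hjm⟩ := hex
    refine ⟨m, hmc, hjm, fun a hja => ?_⟩
    have hlt : j ⊓ a < j :=
      lt_of_le_of_ne inf_le_left fun h => hja (inf_eq_left.mp h)
    have h1 : j ⊓ a ≤ m := le_trans (le_sSup (show j ⊓ a ∈ {a : A | a < j} from hlt)) hsm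
    have hdd : (m ⊔ j) ⊓ (m ⊔ a) = m := by
      have e1 : (m ⊔ j) ⊓ (m ⊔ a) = m ⊔ (j ⊓ a) := by
        rw [hdist (m ⊔ j) m a, inf_eq_right.2 le_sup_left, inf_comm (m ⊔ j) a,
          hdist a m j, ← sup_assoc, (sup_eq_left.2 inf_le_right : m ⊔ (a ⊓ m) = m), inf_comm a j]
      rw [e1]; exact sup_eq_left.2 h1
    have hmem := hmc {m ⊔ j, m ⊔ a} (by rw [sInf_pair]; exact hdd.symm)
    simp only [Set.mem_insert_iff, Set.mem_singleton_iff] at hmem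
    rcases hmem with h | h
    · exact absurd (le_sup_right.trans h.ge) hjm
    · exact le_sup_right.trans h.ge
  have hk : kappa j = m :=
    le_antisymm (sSup_le fun a ha => hmax a ha) (le_sSup hjm)
  rw [hk]
  exact ⟨hmc, fun a => ⟨fun ham hja => hjm (hja.trans ham), fun h => hmax a h⟩⟩

/-- Completely join-irreducible elements are completely join-prime. -/
lemma cji_prime (hperf : PerfectLattice A)
    (hdist : ∀ a b c : A, a ⊓ (b ⊔ c) = (a ⊓ b) ⊔ (a ⊓ c))
    {j : A} (hj : CJI j) {T : Set A} (h : j ≤ sSup T) : ∃ t ∈ T, j ≤ t := by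
  obtain ⟨_, hspec⟩ := kappa_prop hperf hdist hj
  by_contra hcon
  push_neg at hcon
  have h1 : sSup T ≤ kappa j := sSup_le fun t ht => (hspec t).2 (hcon t ht)
  exact (hspec (kappa j)).1 le_rfl (h.trans h1)

lemma cji_lneg {m : A} (hm : CMI m) : CJI (S.lneg m) := by
  intro T hT
  have hmm : m = S.rneg (sSup T) := by rw [← hT, S.rneg_lneg]
  have hmem : m ∈ S.rneg '' T := by
    apply hm
    apply le_antisymm
    · refine le_sInf ?_
      rintro b ⟨t, ht, rfl⟩
      exact (g1 S m t).2 (hT ▸ le_sSup ht)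
    · rw [hmm]
      refine (g1 S _ _).2 (sSup_le fun t ht => ?_)
      exact (g2 S t _).2 (sInf_le ⟨t, ht, rfl⟩)
  obtain ⟨t, ht, htm⟩ := hmem
  have : S.lneg m = t := by rw [← htm, S.lneg_rneg]
  rwa [this]

lemma cji_rneg {m : A} (hm : CMI m) : CJI (S.rneg m) := by
  intro T hT
  have hmm : m = S.lneg (sSup T) := by rw [← hT, S.lneg_rneg]
  have hmem : m ∈ S.lneg '' T := by
    apply hm
    apply le_antisymm
    · refine le_sInf ?_
      rintro b ⟨t, ht, rfl⟩
      exact (g2 S m t).2 (hT ▸ le_sSup ht)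
    · rw [hmm]
      refine (g2 S _ _).2 (sSup_le fun t ht => ?_)
      exact (g1 S t _).2 (sInf_le ⟨t, ht, rfl⟩)
  obtain ⟨t, ht, htm⟩ := hmem
  have : S.rneg m = t := by rw [← htm, S.rneg_lneg]
  rwa [this]

lemma le_mul_left' (hperf : PerfectLattice A)
    (hdist : ∀ a b c : A, a ⊓ (b ⊔ c) = (a ⊓ b) ⊔ (a ⊓ c))
    {y : A} (hy : CJI y) {a x : A} (h : y ≤ S.mul a x) :
    ∃ j, CJI j ∧ j ≤ a ∧ y ≤ S.mul j x := by
  have hdistr : S.mul a x ≤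
      sSup ((fun j => S.mul j x) '' {j | CJI j ∧ j ≤ a}) := by
    rw [S.res_left]
    conv_lhs => rw [(hperf a).1]
    exact sSup_le fun j hj =>
      (S.res_left j x _).1 (le_sSup (Set.mem_image_of_mem _ hj))
  obtain ⟨t, ht, hyt⟩ := cji_prime hperf hdist hy (h.trans hdistr)
  obtain ⟨j, hj, rfl⟩ := ht
  exact ⟨j, hj.1, hj.2, hyt⟩

lemma le_mul_right' (hperf : PerfectLattice A)
    (hdist : ∀ a b c : A, a ⊓ (b ⊔ c) = (a ⊓ b) ⊔ (a ⊓ c))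
    {y : A} (hy : CJI y) {a x : A} (h : y ≤ S.mul x a) :
    ∃ j, CJI j ∧ j ≤ a ∧ y ≤ S.mul x j := by
  have hdistr : S.mul x a ≤
      sSup ((fun j => S.mul x j) '' {j | CJI j ∧ j ≤ a}) := by
    rw [S.res_right]
    conv_lhs => rw [(hperf a).1]
    exact sSup_le fun j hj =>
      (S.res_right x j _).1 (le_sSup (Set.mem_image_of_mem _ hj))
  obtain ⟨t, ht, hyt⟩ := cji_prime hperf hdist hy (h.trans hdistr)
  obtain ⟨j, hj, rfl⟩ := ht
  exact ⟨j, hj.1, hj.2, hyt⟩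

lemma lneg_kappa_le_iff (hperf : PerfectLattice A)
    (hdist : ∀ a b c : A, a ⊓ (b ⊔ c) = (a ⊓ b) ⊔ (a ⊓ c))
    {z : A} (hz : CJI z) (c : A) :
    S.lneg (kappa z) ≤ c ↔ ¬ z ≤ S.rneg c := by
  obtain ⟨_, hspec⟩ := kappa_prop hperf hdist hz
  rw [← hspec (S.rneg c)]
  constructor
  · intro h
    have := rneg_antitone S h
    rwa [S.rneg_lneg] at this
  · intro h
    have := lneg_antitone S h
    rwa [S.lneg_rneg] at this

lemma rneg_kappa_le_iff (hperf : PerfectLattice A)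
    (hdist : ∀ a b c : A, a ⊓ (b ⊔ c) = (a ⊓ b) ⊔ (a ⊓ c))
    {z : A} (hz : CJI z) (c : A) :
    S.rneg (kappa z) ≤ c ↔ ¬ z ≤ S.lneg c := by
  obtain ⟨_, hspec⟩ := kappa_prop hperf hdist hz
  rw [← hspec (S.lneg c)]
  constructor
  · intro h
    have := lneg_antitone S h
    rwa [S.lneg_rneg] at this
  · intro h
    have := rneg_antitone S h
    rwa [S.rneg_lneg] at this

end Aux

/-- The dual structure `A₊ = (J∞(A), I₁, ≼, ∘, ∼, −)` of a complete perfect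
distributive InFL-algebra is a DInFL-frame, where `I₁ = {i : i ≤ 1}`,
`a ≼ b ⟺ b ≤ a`, `c ∈ a∘b ⟺ c ≤ a·b`, `a^∼ = ∼κ(a)` and `a^− = −κ(a)`. -/
theorem dual_frame_of_perfect_DInFL {A : Type*} [CompleteLattice A]
    (S : InFL A) (hperf : PerfectLattice A)
    (hdist : ∀ a b c : A, a ⊓ (b ⊔ c) = (a ⊓ b) ⊔ (a ⊓ c)) :
    ∃ F : DInFLFrame {a : A // CJI a},
      F.I = {i | i.1 ≤ S.one} ∧
      (∀ a b, F.le a b ↔ b.1 ≤ a.1) ∧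
      (∀ a b c, c ∈ F.comp a b ↔ c.1 ≤ S.mul a.1 b.1) ∧
      (∀ a, (F.tld a).1 = S.lneg (kappa a.1)) ∧
      (∀ a, (F.mns a).1 = S.rneg (kappa a.1)) := by
  have hcmi : ∀ a : {a : A // CJI a}, CMI (kappa a.1) :=
    fun a => (kappa_prop hperf hdist a.2).1
  refine ⟨{
    I := {i | i.1 ≤ S.one}
    le := fun a b => b.1 ≤ a.1
    le_refl := fun x => le_rfl
    le_trans := fun x y z h1 h2 => h2.trans h1
    le_antisymm := fun x y h1 h2 => Subtype.ext (le_antisymm h2 h1)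
    comp := fun a b => {c | c.1 ≤ S.mul a.1 b.1}
    tld := fun a => ⟨S.lneg (kappa a.1), cji_lneg S (hcmi a)⟩
    mns := fun a => ⟨S.rneg (kappa a.1), cji_rneg S (hcmi a)⟩
    ax1 := ?_
    ax2 := fun x y hxy hx => le_trans hxy hx
    ax3 := fun u v x y hxy hx => le_trans hxy hx
    ax4 := ?_
    ax5 := ?_
    ax6 := ?_ }, rfl, fun a b => Iff.rfl, fun a b c => Iff.rfl,
    fun a => rfl, fun a => rfl⟩
  · -- ax1
    intro x y
    constructor
    · constructor
      · intro h
        obtain ⟨j, hj, hj1, hle⟩ := le_mul_left' S hperf hdist y.2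
          (show y.1 ≤ S.mul S.one x.1 by rwa [S.one_mul])
        exact ⟨⟨j, hj⟩, hj1, x, rfl, hle⟩
      · rintro ⟨i, hi, b, hb, hz⟩
        rw [show b = x from hb] at hz
        calc y.1 ≤ S.mul i.1 x.1 := hz
          _ ≤ S.mul S.one x.1 := mul_le_mul_l S _ hi
          _ = x.1 := S.one_mul x.1
    · constructor
      · intro h
        obtain ⟨j, hj, hj1, hle⟩ := le_mul_right' S hperf hdist y.2
          (show y.1 ≤ S.mul x.1 S.one by rwa [S.mul_one])
        exact ⟨x, rfl, ⟨j, hj⟩, hj1, hle⟩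
      · rintro ⟨b, hb, i, hi, hz⟩
        rw [show b = x from hb] at hz
        calc y.1 ≤ S.mul x.1 i.1 := hz
          _ ≤ S.mul x.1 S.one := mul_le_mul_r S _ hi
          _ = x.1 := S.mul_one x.1
  · -- ax4
    intro x y z
    ext w
    constructor
    · rintro ⟨a, ha, b, hb, hw⟩
      rw [show b = z from hb] at hw
      have h1 : w.1 ≤ S.mul (S.mul x.1 y.1) z.1 :=
        le_trans hw (mul_le_mul_l S _ ha)
      rw [S.mul_assoc] at h1
      obtain ⟨j, hj, hjle, hle⟩ := le_mul_right' S hperf hdist w.2 h1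
      exact ⟨x, rfl, ⟨j, hj⟩, hjle, hle⟩
    · rintro ⟨b, hb, a, ha, hw⟩
      rw [show b = x from hb] at hw
      have h1 : w.1 ≤ S.mul x.1 (S.mul y.1 z.1) :=
        le_trans hw (mul_le_mul_r S _ ha)
      rw [← S.mul_assoc] at h1
      obtain ⟨j, hj, hjle, hle⟩ := le_mul_left' S hperf hdist w.2 h1
      exact ⟨⟨j, hj⟩, hjle, z, rfl, hle⟩
  · -- ax5
    intro x y z
    show S.lneg (kappa z.1) ≤ S.mul x.1 y.1 ↔ S.rneg (kappa y.1) ≤ S.mul z.1 x.1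
    rw [lneg_kappa_le_iff S hperf hdist z.2, rneg_kappa_le_iff S hperf hdist y.2]
    exact not_congr (rot' S x.1 y.1 z.1)
  · -- ax6
    intro x
    obtain ⟨_, hspec⟩ := kappa_prop hperf hdist x.2
    constructor
    · show x.1 ≤ S.rneg (kappa (S.lneg (kappa x.1)))
      refine (g1 S x.1 _).2 ?_
      refine sSup_le fun a ha => ?_
      by_contra hc
      have h1 : ¬ x.1 ≤ S.rneg a := fun h => hc ((g2 S a x.1).2 h)
      have h2 : S.rneg a ≤ kappa x.1 := (hspec _).2 h1
      have h3 := lneg_antitone S h2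
      rw [S.lneg_rneg] at h3
      exact ha h3
    · show x.1 ≤ S.lneg (kappa (S.rneg (kappa x.1)))
      refine (g2 S x.1 _).2 ?_
      refine sSup_le fun a ha => ?_
      by_contra hc
      have h1 : ¬ x.1 ≤ S.lneg a := fun h => hc ((g1 S a x.1).2 h)
      have h2 : S.lneg a ≤ kappa x.1 := (hspec _).2 h1
      have h3 := rneg_antitone S h2
      rw [S.rneg_lneg] at h3
      exact ha h3
end

section
/- Let W = (W, I, ≼, ∘, ∼, −, ¬) be a DqRA-frame. Then x^{∼¬} = x^{¬−} for all x ∈ W. -/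
/-- A DqRA-frame: a DInFL-frame with a De Morgan operation `ng` (¬) satisfying
(7) `x^{¬¬} = x`, (8) `¬` is order-reversing, and
(9) `z⁻ ∈ x∘y ⟺ z^¬ ∈ y^{∼¬} ∘ x^{∼¬}`. -/
structure DqRAFrame (W : Type*) extends DInFLFrame W where
  ng : W → W
  ax7 : ∀ x, ng (ng x) = x
  ax8 : ∀ x y, le x y → le (ng y) (ng x)
  ax9 : ∀ x y z, mns z ∈ comp x y ↔ ng z ∈ comp (ng (tld y)) (ng (tld x))

/-- The operation `¬U = {x : x^¬ ∉ U}` of the complex algebra of a DqRA-frame. -/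
def DqRAFrame.nneg {W : Type*} (F : DqRAFrame W) (U : Set W) : Set W :=
  {x | F.ng x ∉ U}

section Aux
variable {W : Type*}

lemma DInFLFrame.le_iff_left_s8 (F : DInFLFrame W) (x y : W) :
    F.le x y ↔ ∃ e ∈ F.I, y ∈ F.comp e x := by
  rw [(F.ax1 x y).1]
  constructor
  · rintro ⟨e, he, b, rfl, h⟩; exact ⟨e, he, h⟩
  · rintro ⟨e, he, h⟩; exact ⟨e, he, x, rfl, h⟩

lemma DInFLFrame.le_iff_right_s8 (F : DInFLFrame W) (x y : W) :
    F.le x y ↔ ∃ e ∈ F.I, y ∈ F.comp x e := by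
  rw [(F.ax1 x y).2]
  constructor
  · rintro ⟨b, rfl, e, he, h⟩; exact ⟨e, he, h⟩
  · rintro ⟨e, he, h⟩; exact ⟨x, rfl, e, he, h⟩

lemma DInFLFrame.mns_tld_s8 (F : DInFLFrame W) (x : W) : F.mns (F.tld x) = x := by
  apply F.le_antisymm _ _ ((F.ax6 x).1)
  obtain ⟨e, he, h⟩ := (F.le_iff_left_s8 (F.tld x) (F.tld x)).1 (F.le_refl _)
  have h2 : F.mns (F.tld x) ∈ F.comp x e := (F.ax5 e (F.tld x) x).1 h
  exact (F.le_iff_right_s8 x (F.mns (F.tld x))).2 ⟨e, he, h2⟩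

lemma DInFLFrame.tld_mns_s8 (F : DInFLFrame W) (x : W) : F.tld (F.mns x) = x := by
  apply F.le_antisymm _ _ ((F.ax6 x).2)
  obtain ⟨e, he, h⟩ := (F.le_iff_right_s8 (F.mns x) (F.mns x)).1 (F.le_refl _)
  have h2 : F.tld (F.mns x) ∈ F.comp e x := (F.ax5 e x (F.mns x)).2 h
  exact (F.le_iff_left_s8 x (F.tld (F.mns x))).2 ⟨e, he, h2⟩

/-- Key equivalence: `x ∈ y∘z ↔ z^¬ ∈ (y^{∼¬}) ∘ (x^¬)`. -/
lemma DqRAFrame.star (F : DqRAFrame W) (x y z : W) :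
    x ∈ F.comp y z ↔ F.ng z ∈ F.comp (F.ng (F.tld y)) (F.ng x) := by
  have h1 : x ∈ F.comp y z ↔ F.mns z ∈ F.comp (F.mns x) y := by
    have := F.ax5 y z (F.mns x)
    rw [F.tld_mns_s8] at this
    exact this
  have h2 := F.ax9 (F.mns x) y z
  rw [F.tld_mns_s8] at h2
  exact h1.trans h2

/-- `¬∼` is an involution. -/
lemma DqRAFrame.ng_tld_invol (F : DqRAFrame W) (y : W) :
    F.ng (F.tld (F.ng (F.tld y))) = y := by
  set hy := F.ng (F.tld (F.ng (F.tld y))) with hhy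
  have key : ∀ x z : W, x ∈ F.comp y z ↔ x ∈ F.comp hy z := by
    intro x z
    rw [F.star x y z, F.star (F.ng z) (F.ng (F.tld y)) (F.ng x), F.ax7, F.ax7, hhy]
  apply F.le_antisymm
  · obtain ⟨e, he, h⟩ := (F.le_iff_right_s8 y y).1 (F.le_refl _)
    exact (F.le_iff_right_s8 hy y).2 ⟨e, he, (key y e).1 h⟩
  · obtain ⟨e, he, h⟩ := (F.le_iff_right_s8 hy hy).1 (F.le_refl _)
    exact (F.le_iff_right_s8 y hy).2 ⟨e, he, (key hy e).2 h⟩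

end Aux

/-- In any DqRA-frame, `x^{∼¬} = x^{¬−}` for all `x`. -/
theorem dqra_frame_di {W : Type*} (F : DqRAFrame W) :
    ∀ x : W, F.ng (F.tld x) = F.mns (F.ng x) := by
  intro x
  have h := F.ng_tld_invol x
  have h2 : F.tld (F.ng (F.tld x)) = F.ng x := by
    have := congrArg F.ng h
    rwa [F.ax7] at this
  have := congrArg F.mns h2
  rwa [F.mns_tld_s8] at this
end

section
/- If A is a complete perfect distributive quasi relation algebra, then the map ψ(a) = {j ∈ J∞(A) : j ≤ a} is an isomorphism from A onto the complex algebra (A_+)^+ of its dual DqRA-frame A_+; in particular ψ additionally satisfies ψ(¬a) = ¬ψ(a). -/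
/-- The map `ψ(a) = {j ∈ J∞(A) : j ≤ a}`. -/
def psiMap {A : Type*} [CompleteLattice A] (a : A) : Set {a : A // CJI a} :=
  {j | j.1 ≤ a}

/-- Upsets of `(J∞(A), ≼)` where `j ≼ k ⟺ k ≤ j`. -/
def IsJUpset {A : Type*} [CompleteLattice A] (U : Set {a : A // CJI a}) : Prop :=
  ∀ j k : {a : A // CJI a}, k.1 ≤ j.1 → j ∈ U → k ∈ U


section Aux

variable {A : Type*}

lemma InFL.mul_le_mul' [Lattice A] (S : InFL A) {a b c d : A} (h1 : a ≤ b) (h2 : c ≤ d) :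
    S.mul a c ≤ S.mul b d := by
  have hl : S.mul a c ≤ S.mul b c :=
    (S.res_left a c (S.mul b c)).mpr (h1.trans ((S.res_left b c (S.mul b c)).mp le_rfl))
  have hr : S.mul b c ≤ S.mul b d :=
    (S.res_right b c (S.mul b d)).mpr (h2.trans ((S.res_right b d (S.mul b d)).mp le_rfl))
  exact hl.trans hr

lemma InFL.lneg_le_lneg' [Lattice A] (S : InFL A) {a b : A} (h : a ≤ b) :
    S.lneg b ≤ S.lneg a := by
  have key : ∀ x y : A, S.mul x (S.lneg y) ≤ S.lneg S.one ↔ S.lneg y ≤ S.lneg x := by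
    intro x y
    have h' := S.res_right x (S.lneg y) (S.lneg S.one)
    rw [S.rneg_lneg, S.one_mul] at h'
    exact h'
  exact (key a b).mp ((S.mul_le_mul' h le_rfl).trans ((key b b).mpr le_rfl))

lemma InFL.rneg_le_rneg' [Lattice A] (S : InFL A) {a b : A} (h : a ≤ b) :
    S.rneg b ≤ S.rneg a := by
  have key : ∀ x y : A, S.mul (S.rneg x) y ≤ S.rneg S.one ↔ S.rneg x ≤ S.rneg y := by
    intro x y
    have h' := S.res_left (S.rneg x) y (S.rneg S.one)
    rw [S.lneg_rneg, S.mul_one] at h'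
    exact h'
  exact (key b a).mp ((S.mul_le_mul' le_rfl h).trans ((key b b).mpr le_rfl))

lemma cji_not_le_kappa [CompleteLattice A] (hperf : PerfectLattice A)
    (hdist : ∀ a b c : A, a ⊓ (b ⊔ c) = (a ⊓ b) ⊔ (a ⊓ c))
    {j : A} (hj : CJI j) : ¬ j ≤ kappa j := by
  set jl := sSup {x : A | x ≤ j ∧ x ≠ j} with hjl_def
  have hjl_le : jl ≤ j := sSup_le fun x hx => hx.1
  have hjl_ne : jl ≠ j := by
    intro h
    exact (hj {x | x ≤ j ∧ x ≠ j} (by rw [← hjl_def, h])).2 rfl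
  have hnotjjl : ¬ j ≤ jl := fun h => hjl_ne (le_antisymm hjl_le h)
  have hlow : ∀ x : A, x ≤ j → x ≠ j → x ≤ jl := fun x h1 h2 => le_sSup ⟨h1, h2⟩
  obtain ⟨m, hmCMI, hjlm, hjm⟩ : ∃ m, CMI m ∧ jl ≤ m ∧ ¬ j ≤ m := by
    by_contra h
    push_neg at h
    exact hnotjjl (((hperf jl).2) ▸ le_sInf (fun m hm => h m hm.1 hm.2))
  set mp := sInf {x : A | m ≤ x ∧ x ≠ m} with hmp_def
  have hm_le_mp : m ≤ mp := le_sInf fun x hx => hx.1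
  have hmp_ne : mp ≠ m := by
    intro h
    exact (hmCMI {x | m ≤ x ∧ x ≠ m} (by rw [← hmp_def, h])).2 rfl
  have hup : ∀ x : A, m ≤ x → x ≠ m → mp ≤ x := fun x h1 h2 => sInf_le ⟨h1, h2⟩
  have hmpj : mp ≤ m ⊔ j :=
    hup _ le_sup_left (fun h => hjm (by rw [← h]; exact le_sup_right))
  have hjmp : j ≤ mp := by
    have h1 : mp ⊓ (m ⊔ j) = (mp ⊓ m) ⊔ (mp ⊓ j) := hdist mp m j
    rw [inf_eq_left.mpr hmpj, inf_eq_right.mpr hm_le_mp] at h1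
    by_cases hc : mp ⊓ j = j
    · exact (le_of_eq hc.symm).trans inf_le_left
    · have h2 : mp ⊓ j ≤ m := (hlow _ inf_le_right hc).trans hjlm
      have h3 : mp ≤ m := by rw [h1]; exact sup_le le_rfl h2
      exact absurd (le_antisymm h3 hm_le_mp) hmp_ne
  have hkm : kappa j ≤ m := by
    apply sSup_le
    intro a ha
    by_contra ham
    have hmam : mp ≤ m ⊔ a :=
      hup _ le_sup_left (fun h => ham (by rw [← h]; exact le_sup_right))
    have hj2 : j ≤ (j ⊓ m) ⊔ (j ⊓ a) := by
      rw [← hdist j m a]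
      exact le_inf le_rfl (hjmp.trans hmam)
    have hja : j ⊓ a ≤ jl :=
      hlow _ inf_le_left (fun h => ha (inf_eq_left.mp (by rw [inf_comm] at h; rwa [inf_comm])))
    have hjm2 : j ⊓ m ≤ jl :=
      hlow _ inf_le_left (fun h => hjm (inf_eq_left.mp (by rw [inf_comm] at h; rwa [inf_comm])))
    exact hnotjjl (hj2.trans (sup_le hjm2 hja))
  exact fun h => hjm (h.trans hkm)

lemma cji_le_iff_kappa [CompleteLattice A] (hperf : PerfectLattice A)
    (hdist : ∀ a b c : A, a ⊓ (b ⊔ c) = (a ⊓ b) ⊔ (a ⊓ c))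
    {j : A} (hj : CJI j) (a : A) : j ≤ a ↔ ¬ a ≤ kappa j := by
  constructor
  · intro h hk
    exact cji_not_le_kappa hperf hdist hj (h.trans hk)
  · intro h
    by_contra hja
    exact h (le_sSup hja)

lemma cji_le_sSup_iff [CompleteLattice A] (hperf : PerfectLattice A)
    (hdist : ∀ a b c : A, a ⊓ (b ⊔ c) = (a ⊓ b) ⊔ (a ⊓ c))
    {j : A} (hj : CJI j) (T : Set A) : j ≤ sSup T ↔ ∃ t ∈ T, j ≤ t := by
  rw [cji_le_iff_kappa hperf hdist hj]
  rw [show (sSup T ≤ kappa j) ↔ ∀ t ∈ T, t ≤ kappa j from sSup_le_iff]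
  push_neg
  constructor
  · rintro ⟨t, ht, h⟩
    exact ⟨t, ht, (cji_le_iff_kappa hperf hdist hj t).mpr h⟩
  · rintro ⟨t, ht, h⟩
    exact ⟨t, ht, (cji_le_iff_kappa hperf hdist hj t).mp h⟩

end Aux

/-- A complete perfect distributive quasi relation algebra is isomorphic, via
`ψ(a) = {j ∈ J∞(A) : j ≤ a}`, to the complex algebra `(A₊)⁺` of its dual
DqRA-frame; in particular `ψ` additionally satisfies `ψ(¬a) = ¬ψ(a)`. -/
theorem perfect_DqRA_iso_complex_algebra {A : Type*} [CompleteLattice A]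
    (Q : QRA A) (hperf : PerfectLattice A)
    (hdist : ∀ a b c : A, a ⊓ (b ⊔ c) = (a ⊓ b) ⊔ (a ⊓ c)) :
    (∀ a : A, IsJUpset (psiMap a)) ∧
    Function.Injective (psiMap (A := A)) ∧
    (∀ U, IsJUpset U → ∃ a : A, psiMap a = U) ∧
    (∀ a b : A, a ≤ b ↔ psiMap a ⊆ psiMap b) ∧
    (∀ a b : A, psiMap (a ⊓ b) = psiMap a ∩ psiMap b) ∧
    (∀ a b : A, psiMap (a ⊔ b) = psiMap a ∪ psiMap b) ∧
    psiMap Q.one = {i : {a : A // CJI a} | i.1 ≤ Q.one} ∧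
    (∀ a b : A, psiMap (Q.mul a b) =
      setComp (fun j k => {c : {a : A // CJI a} | c.1 ≤ Q.mul j.1 k.1})
        (psiMap a) (psiMap b)) ∧
    (∀ a : A, psiMap (Q.lneg a) = {j : {a : A // CJI a} | ¬ Q.rneg (kappa j.1) ≤ a}) ∧
    (∀ a : A, psiMap (Q.rneg a) = {j : {a : A // CJI a} | ¬ Q.lneg (kappa j.1) ≤ a}) ∧
    (∀ a : A, psiMap (Q.neg a) = {j : {a : A // CJI a} | ¬ Q.neg (kappa j.1) ≤ a}) := by

  have lek : ∀ (j : {a : A // CJI a}) (a : A), j.1 ≤ a ↔ ¬ a ≤ kappa j.1 :=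
    fun j a => cji_le_iff_kappa hperf hdist j.2 a
  have hmul_sSup_left : ∀ (T : Set A) (b x : A),
      Q.mul (sSup T) b ≤ x ↔ ∀ t ∈ T, Q.mul t b ≤ x := by
    intro T b x
    constructor
    · intro h t ht
      exact (Q.toInFL.mul_le_mul' (le_sSup ht) le_rfl).trans h
    · intro h
      exact (Q.res_left _ _ _).mpr (sSup_le fun t ht => (Q.res_left t b x).mp (h t ht))
  have hmul_sSup_right : ∀ (a : A) (T : Set A) (x : A),
      Q.mul a (sSup T) ≤ x ↔ ∀ t ∈ T, Q.mul a t ≤ x := by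
    intro a T x
    constructor
    · intro h t ht
      exact (Q.toInFL.mul_le_mul' le_rfl (le_sSup ht)).trans h
    · intro h
      exact (Q.res_right _ _ _).mpr (sSup_le fun t ht => (Q.res_right a t x).mp (h t ht))
  refine ⟨?_, ?_, ?_, ?_, ?_, ?_, rfl, ?_, ?_, ?_, ?_⟩
  · -- upsets
    intro a j k hkj hj
    exact le_trans hkj hj
  · -- injective
    intro a b h
    rw [(hperf a).1, (hperf b).1]
    congr 1
    ext j
    constructor
    · rintro ⟨hj, hja⟩
      exact ⟨hj, (Set.ext_iff.mp h ⟨j, hj⟩).mp hja⟩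
    · rintro ⟨hj, hjb⟩
      exact ⟨hj, (Set.ext_iff.mp h ⟨j, hj⟩).mpr hjb⟩
  · -- surjective onto upsets
    intro U hU
    refine ⟨sSup (Subtype.val '' U), ?_⟩
    ext k
    constructor
    · intro hk
      have : k.1 ≤ sSup (Subtype.val '' U) := hk
      obtain ⟨t, ht, hkt⟩ := (cji_le_sSup_iff hperf hdist k.2 _).mp this
      obtain ⟨j, hjU, rfl⟩ := ht
      exact hU j k hkt hjU
    · intro hk
      exact le_sSup ⟨k, hk, rfl⟩
  · -- order embedding
    intro a b
    constructor
    · intro h j hj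
      exact le_trans hj h
    · intro h
      rw [(hperf a).1]
      exact sSup_le fun j hj => h (show (⟨j, hj.1⟩ : {a : A // CJI a}) ∈ psiMap a from hj.2)
  · -- meet
    intro a b
    exact Set.ext fun j => le_inf_iff
  · -- join
    intro a b
    ext j
    have : j.1 ≤ a ⊔ b ↔ j.1 ≤ a ∨ j.1 ≤ b := by
      rw [← sSup_pair, cji_le_sSup_iff hperf hdist j.2]
      simp
    exact this
  · -- mul
    intro a b
    ext c
    simp only [psiMap, setComp, Set.mem_setOf_eq]
    constructor
    · intro hc
      have h1 : ∃ j, CJI j ∧ j ≤ a ∧ c.1 ≤ Q.mul j b := by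
        have hne : ¬ ∀ t ∈ {j : A | CJI j ∧ j ≤ a}, Q.mul t b ≤ kappa c.1 := by
          intro hall
          apply (lek c (Q.mul a b)).mp hc
          calc Q.mul a b = Q.mul (sSup {j : A | CJI j ∧ j ≤ a}) b := by rw [← (hperf a).1]
            _ ≤ kappa c.1 := (hmul_sSup_left _ _ _).mpr hall
        push_neg at hne
        obtain ⟨t, ⟨htc, hta⟩, ht⟩ := hne
        exact ⟨t, htc, hta, (lek c _).mpr ht⟩
      obtain ⟨j, hjc, hja, hcj⟩ := h1
      have h2 : ∃ k, CJI k ∧ k ≤ b ∧ c.1 ≤ Q.mul j k := by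
        have hne : ¬ ∀ t ∈ {k : A | CJI k ∧ k ≤ b}, Q.mul j t ≤ kappa c.1 := by
          intro hall
          apply (lek c (Q.mul j b)).mp hcj
          calc Q.mul j b = Q.mul j (sSup {k : A | CJI k ∧ k ≤ b}) := by rw [← (hperf b).1]
            _ ≤ kappa c.1 := (hmul_sSup_right _ _ _).mpr hall
        push_neg at hne
        obtain ⟨t, ⟨htc, htb⟩, ht⟩ := hne
        exact ⟨t, htc, htb, (lek c _).mpr ht⟩
      obtain ⟨k, hkc, hkb, hck⟩ := h2
      exact ⟨⟨j, hjc⟩, hja, ⟨k, hkc⟩, hkb, hck⟩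
    · rintro ⟨x, hx, y, hy, hc⟩
      exact hc.trans (Q.toInFL.mul_le_mul' hx hy)
  · -- lneg
    intro a
    ext j
    simp only [psiMap, Set.mem_setOf_eq]
    rw [lek j (Q.lneg a)]
    apply not_congr
    constructor
    · intro h
      have h2 := Q.toInFL.rneg_le_rneg' h
      rwa [Q.rneg_lneg] at h2
    · intro h
      have h2 := Q.toInFL.lneg_le_lneg' h
      rwa [Q.lneg_rneg] at h2
  · -- rneg
    intro a
    ext j
    simp only [psiMap, Set.mem_setOf_eq]
    rw [lek j (Q.rneg a)]
    apply not_congr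
    constructor
    · intro h
      have h2 := Q.toInFL.lneg_le_lneg' h
      rwa [Q.lneg_rneg] at h2
    · intro h
      have h2 := Q.toInFL.rneg_le_rneg' h
      rwa [Q.rneg_lneg] at h2
  · -- neg
    intro a
    ext j
    simp only [psiMap, Set.mem_setOf_eq]
    have hneg_anti : ∀ {x y : A}, x ≤ y → Q.neg y ≤ Q.neg x := by
      intro x y h
      have h1 : Q.neg (x ⊓ y) = Q.neg x ⊔ Q.neg y := Q.dm x y
      rw [inf_eq_left.mpr h] at h1
      rw [h1]
      exact le_sup_right
    rw [lek j (Q.neg a)]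
    apply not_congr
    constructor
    · intro h
      have h2 := hneg_anti h
      rwa [Q.neg_neg] at h2
    · intro h
      have h2 := hneg_anti h
      rwa [Q.neg_neg] at h2
end

section
/- Let W₁ and W₂ be DInFL-frames and let f : W₁ → W₂ be a DInFL-frame morphism. Then: (i) the map f⁺ : Up(W₂,≼₂) → Up(W₁,≼₁) defined by f⁺(U) = f⁻¹[U] is a homomorphism of the complex algebras from W₂^+ to W₁^+ preserving arbitrary unions and intersections (a complete homomorphism); (ii) if f is surjective then f⁺ is injective; (iii) if f is an order-embedding then f⁺ is surjective. -/
/-- A DInFL-frame morphism between two DInFL-frames. -/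
def IsDInFLFrameMorphism {W₁ W₂ : Type*} (F₁ : DInFLFrame W₁) (F₂ : DInFLFrame W₂)
    (f : W₁ → W₂) : Prop :=
  (∀ x y, F₁.le x y → F₂.le (f x) (f y)) ∧
  (∀ x y z, z ∈ F₁.comp x y → f z ∈ F₂.comp (f x) (f y)) ∧
  (∀ z u v, f z ∈ F₂.comp u v →
    ∃ x y, F₂.le u (f x) ∧ F₂.le v (f y) ∧ z ∈ F₁.comp x y) ∧
  (∀ x, f (F₁.tld x) = F₂.tld (f x)) ∧
  (∀ x, f (F₁.mns x) = F₂.mns (f x)) ∧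
  F₁.I = f ⁻¹' F₂.I

/-- The dual `f⁺(U) = f⁻¹[U]` of a DInFL-frame morphism is a complete
homomorphism of complex algebras from `W₂⁺` to `W₁⁺`; it is injective when `f`
is surjective, and surjective when `f` is an order-embedding. -/
theorem frame_morphism_dual_complete_hom {W₁ W₂ : Type*}
    (F₁ : DInFLFrame W₁) (F₂ : DInFLFrame W₂) (f : W₁ → W₂)
    (hf : IsDInFLFrameMorphism F₁ F₂ f) :
    ((∀ U, F₂.IsUpset U → F₁.IsUpset (f ⁻¹' U)) ∧
     (∀ 𝒮 : Set (Set W₂), f ⁻¹' ⋃₀ 𝒮 = ⋃₀ ((fun U => f ⁻¹' U) '' 𝒮)) ∧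
     (∀ 𝒮 : Set (Set W₂), f ⁻¹' ⋂₀ 𝒮 = ⋂₀ ((fun U => f ⁻¹' U) '' 𝒮)) ∧
     f ⁻¹' F₂.I = F₁.I ∧
     (∀ U V, F₂.IsUpset U → F₂.IsUpset V →
       f ⁻¹' (setComp F₂.comp U V) = setComp F₁.comp (f ⁻¹' U) (f ⁻¹' V)) ∧
     (∀ U, F₂.IsUpset U → f ⁻¹' (F₂.sneg U) = F₁.sneg (f ⁻¹' U)) ∧
     (∀ U, F₂.IsUpset U → f ⁻¹' (F₂.mneg U) = F₁.mneg (f ⁻¹' U))) ∧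
    (Function.Surjective f →
      ∀ U V, F₂.IsUpset U → F₂.IsUpset V → f ⁻¹' U = f ⁻¹' V → U = V) ∧
    ((∀ x y, F₁.le x y ↔ F₂.le (f x) (f y)) →
      ∀ U, F₁.IsUpset U → ∃ V, F₂.IsUpset V ∧ f ⁻¹' V = U) := by

  obtain ⟨hmono, hfor, hback, htld, hmns, hI⟩ := hf
  refine ⟨⟨?_, ?_, ?_, hI.symm, ?_, ?_, ?_⟩, ?_, ?_⟩
  · intro U hU x y hxy hx
    exact hU (f x) (f y) (hmono x y hxy) hx
  · intro 𝒮; ext x; simp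
  · intro 𝒮; ext x; simp
  · intro U V hU hV
    ext z
    constructor
    · rintro ⟨u, hu, v, hv, hz⟩
      obtain ⟨a, b, hua, hvb, hab⟩ := hback z u v hz
      exact ⟨a, hU u (f a) hua hu, b, hV v (f b) hvb hv, hab⟩
    · rintro ⟨a, ha, b, hb, hab⟩
      exact ⟨f a, ha, f b, hb, hfor a b z hab⟩
  · intro U _; ext w
    simp only [Set.mem_preimage, DInFLFrame.sneg, Set.mem_setOf_eq, ← hmns]
  · intro U _; ext w
    simp only [Set.mem_preimage, DInFLFrame.mneg, Set.mem_setOf_eq, ← htld]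
  · intro hs U V _ _ h
    ext y
    obtain ⟨x, rfl⟩ := hs y
    constructor
    · intro hy; exact (h ▸ (Set.mem_preimage.mpr hy) : x ∈ f ⁻¹' V)
    · intro hy; exact (h ▸ (Set.mem_preimage.mpr hy) : x ∈ f ⁻¹' U)
  · intro hemb U hU
    refine ⟨{y | ∃ x ∈ U, F₂.le (f x) y}, ?_, ?_⟩
    · rintro a b hab ⟨x, hx, hxa⟩
      exact ⟨x, hx, F₂.le_trans _ _ _ hxa hab⟩
    · ext z
      constructor
      · rintro ⟨x, hx, hxz⟩
        exact hU x z ((hemb x z).mpr hxz) hx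
      · intro hz
        exact ⟨z, hz, hmono z z (F₁.le_refl z)⟩
end
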